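/- Let c, c' > 0 be real numbers. If exp(−c·u²)·(exp(−c·u²) − 1) = exp(−c'·u²)·(exp(−c'·u²) − 1) for all u ∈ ℝ, then c = c'. -/

import Mathlib

open Real

/-- Key analytic step in the identifiability of the Gaussian MA(1) model:
if `exp(−cu²)(exp(−cu²) − 1) = exp(−c'u²)(exp(−c'u²) − 1)` for all `u`, with
`c, c' > 0`, then `c = c'`. -/
theorem gauss_exponential_identity_inj (c c' : ℝ) (hc : 0 < c) (hc' : 0 < c')
    (h : ∀ u : ℝ,
      Real.exp (-c * u ^ 2) * (Real.exp (-c * u ^ 2) - 1) =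
        Real.exp (-c' * u ^ 2) * (Real.exp (-c' * u ^ 2) - 1)) :
    c = c' := by
  have hcc' : 0 < c + c' := by linarith
  set s : ℝ := 1 / (2 * (c + c')) with hs
  have hspos : 0 < s := by positivity
  set u : ℝ := Real.sqrt s with hu
  have hu2 : u ^ 2 = s := Real.sq_sqrt hspos.le
  have huseq := h u
  set x := Real.exp (-c * u ^ 2) with hx
  set y := Real.exp (-c' * u ^ 2) with hy
  have hfac : (x - y) * (x + y - 1) = 0 := by nlinarith [huseq]
  have hxlb : (-c * u ^ 2) + 1 ≤ x := Real.add_one_le_exp _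
  have hylb : (-c' * u ^ 2) + 1 ≤ y := Real.add_one_le_exp _
  have hsum : x + y - 1 > 0 := by
    have : (c + c') * s = 1 / 2 := by
      field_simp [hs]
      rw [show (c + c') * s * 2 = 2 * (c + c') * s by ring, hs]
      exact mul_one_div_cancel (mul_pos two_pos hcc').ne'
    nlinarith [this]
  have hxy : x = y := by
    rcases mul_eq_zero.mp hfac with h1 | h2
    · linarith
    · linarith
  have := Real.exp_injective (hx ▸ hy ▸ hxy)
  have hune : u ^ 2 ≠ 0 := by rw [hu2]; exact hspos.ne'
  have hmul : c * u ^ 2 = c' * u ^ 2 := by linarith [this]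
  exact mul_right_cancel₀ hune hmul
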